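/- Let C be an F[x]-submodule of V = R_1 × ⋯ × R_ℓ generated by elements g_1, …, g_ρ ∈ V, and for each 1 ≤ i ≤ ℓ let g_i(x) be the monic gcd in F[x] of x^{m_i} − λ_i together with polynomial representatives of π_i(g_1), …, π_i(g_ρ) (so that π_i(C) is the ideal of R_i generated by the image of g_i(x)). If the polynomials (x^{m_1} − λ_1)/g_1(x), (x^{m_2} − λ_2)/g_2(x), …, (x^{m_ℓ} − λ_ℓ)/g_ℓ(x) are pairwise coprime in F[x], then C = π_1(C) × ⋯ × π_ℓ(C); that is, an element (a_1, …, a_ℓ) of V lies in C if and only if a_i ∈ π_i(C) for every 1 ≤ i ≤ ℓ. -/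

import Mathlib

/-!
STATEMENT 0 (Theorem `directprod`, first part): if the polynomials
(x^{mᵢ} − λᵢ)/gᵢ(x) are pairwise coprime, then the multi-twisted code C equals the
product of its projections: v ∈ C ↔ ∀ i, vᵢ ∈ πᵢ(C).

Here gᵢ is the monic gcd of x^{mᵢ} − λᵢ and representatives of πᵢ(g₁),…,πᵢ(g_ρ);
this is encoded faithfully by: gᵢ is monic, gᵢ ∣ x^{mᵢ} − λᵢ, and πᵢ(C) is the
ideal of Rᵢ generated by the image of gᵢ (as stated in the statement itself).
-/

open Polynomial

theorem stmt0 (F : Type*) [Field F] [Fintype F]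
    (ℓ : ℕ) (hℓ : 1 ≤ ℓ)
    (m : Fin ℓ → ℕ) (hm : ∀ i, 1 ≤ m i)
    (lam : Fin ℓ → F) (hlam : ∀ i, lam i ≠ 0)
    -- the block polynomials x^{mᵢ} − λᵢ
    (f : Fin ℓ → Polynomial F) (hf : ∀ i, f i = X ^ (m i) - C (lam i))
    -- the ρ generators of C inside V = ∏ᵢ F[x]/(x^{mᵢ} − λᵢ)
    (ρ : ℕ) (gen : Fin ρ → Π i, Polynomial F ⧸ Ideal.span {f i})
    (Ccode : Submodule (Polynomial F) (Π i, Polynomial F ⧸ Ideal.span {f i}))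
    (hC : Ccode = Submodule.span (Polynomial F) (Set.range gen))
    -- gᵢ = monic gcd of f i and representatives of the πᵢ(gen j), encoded via:
    (g : Fin ℓ → Polynomial F)
    (hgmonic : ∀ i, (g i).Monic)
    (hgdvd : ∀ i, g i ∣ f i)
    (hgspan : ∀ i, Submodule.map (LinearMap.proj i :
        (Π j, Polynomial F ⧸ Ideal.span {f j}) →ₗ[Polynomial F] Polynomial F ⧸ Ideal.span {f i})
        Ccode
      = Submodule.span (Polynomial F) {Ideal.Quotient.mk (Ideal.span {f i}) (g i)})
    -- pairwise coprimality of (x^{mᵢ} − λᵢ)/gᵢ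
    (hcop : ∀ i j, i ≠ j → IsCoprime (f i / g i) (f j / g j)) :
    ∀ v : Π i, Polynomial F ⧸ Ideal.span {f i},
      v ∈ Ccode ↔ ∀ i, v i ∈ Submodule.map (LinearMap.proj i :
        (Π j, Polynomial F ⧸ Ideal.span {f j}) →ₗ[Polynomial F] Polynomial F ⧸ Ideal.span {f i})
        Ccode := by

  have hfg : ∀ i, g i * (f i / g i) = f i := fun i =>
    EuclideanDomain.mul_div_cancel' (hgmonic i).ne_zero (hgdvd i)
  have mk_smul : ∀ i (p q : Polynomial F),
      p • Ideal.Quotient.mk (Ideal.span {f i}) q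
        = Ideal.Quotient.mk (Ideal.span {f i}) (p * q) := by
    intro i p q
    rfl
  intro v
  constructor
  · intro hv i
    exact ⟨v, hv, rfl⟩
  · intro hv
    -- key: the vector supported at i with value mk (g i) lies in Ccode
    have key : ∀ i, Pi.single i (Ideal.Quotient.mk (Ideal.span {f i}) (g i)) ∈ Ccode := by
      intro i
      have hmem : (Ideal.Quotient.mk (Ideal.span {f i}) (g i)) ∈
          Submodule.map (LinearMap.proj i :
            (Π j, Polynomial F ⧸ Ideal.span {f j}) →ₗ[Polynomial F]
              Polynomial F ⧸ Ideal.span {f i}) Ccode := by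
        rw [hgspan i]; exact Submodule.mem_span_singleton_self _
      obtain ⟨c, hc, hci⟩ := hmem
      set H : Polynomial F := ∏ j ∈ Finset.univ.erase i, (f j / g j) with hH
      have hcopHi : IsCoprime H (f i / g i) :=
        IsCoprime.prod_left fun j hj => hcop j i (Finset.ne_of_mem_erase hj)
      obtain ⟨a, b, hab⟩ := hcopHi
      have hzero : ∀ j, j ≠ i → (f j / g j) • c j = 0 := by
        intro j hj
        have : c j ∈ Submodule.map (LinearMap.proj j :
            (Π k, Polynomial F ⧸ Ideal.span {f k}) →ₗ[Polynomial F]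
              Polynomial F ⧸ Ideal.span {f j}) Ccode := ⟨c, hc, rfl⟩
        rw [hgspan j, Submodule.mem_span_singleton] at this
        obtain ⟨p, hp⟩ := this
        rw [← hp, smul_smul, mk_smul,
          show f j / g j * p * g j = p * (g j * (f j / g j)) by ring, hfg j]
        exact Ideal.Quotient.eq_zero_iff_mem.2 (Ideal.mul_mem_left _ _ (Ideal.subset_span rfl))
      have hHc : ∀ j, j ≠ i → H • c j = 0 := by
        intro j hj
        obtain ⟨r, hr⟩ := Finset.dvd_prod_of_mem (fun k => f k / g k)
          (Finset.mem_erase.2 ⟨hj, Finset.mem_univ j⟩)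
        rw [← hH] at hr
        rw [hr, mul_comm, mul_smul, hzero j hj, smul_zero]
      have heq : (a * H) • c = Pi.single i (Ideal.Quotient.mk (Ideal.span {f i}) (g i)) := by
        funext j
        by_cases hj : j = i
        · subst hj
          have hci' : c j = Ideal.Quotient.mk (Ideal.span {f j}) (g j) := hci
          simp only [Pi.smul_apply, Pi.single_eq_same, hci', mk_smul]
          rw [Ideal.Quotient.mk_eq_mk_iff_sub_mem]
          have : a * H * g j - g j = -(b * f j) := by
            have h1 : a * H + b * (f j / g j) = 1 := hab
            have h2 : (a * H + b * (f j / g j)) * g j = g j := by rw [h1, one_mul]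
            have h3 : b * (f j / g j) * g j = b * f j := by
              rw [mul_assoc, mul_comm (f j / g j), hfg j]
            linear_combination h2 - h3
          rw [this]
          exact neg_mem (Ideal.mul_mem_left _ _ (Ideal.subset_span rfl))
        · simp only [Pi.smul_apply, Pi.single_eq_of_ne hj]
          rw [mul_smul, hHc j hj, smul_zero]
      rw [← heq]
      exact Submodule.smul_mem _ _ hc
    -- decompose v
    have hvi : ∀ i, ∃ p : Polynomial F,
        v i = p • Ideal.Quotient.mk (Ideal.span {f i}) (g i) := by
      intro i
      have := hv i
      rw [hgspan i, Submodule.mem_span_singleton] at this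
      obtain ⟨p, hp⟩ := this
      exact ⟨p, hp.symm⟩
    have hvd : v = ∑ i, Pi.single i (v i) := (Finset.univ_sum_single v).symm
    rw [hvd]
    refine Submodule.sum_mem _ fun i _ => ?_
    obtain ⟨pI, hpI⟩ := hvi i
    have hsingle : Pi.single i (v i)
        = pI • (Pi.single i (Ideal.Quotient.mk (Ideal.span {f i}) (g i)) :
            Π j, Polynomial F ⧸ Ideal.span {f j}) := by
      rw [hpI]
      funext j
      by_cases hj : j = i
      · subst hj; simp
      · simp [Pi.single_eq_of_ne hj]
    rw [hsingle]
    exact Submodule.smul_mem _ _ (key i)
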